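/- Let (p_k) with p_0 = 1, p_1 = 1 and p_{k+1} = 2 p_k + p_{k-1} (k ≥ 1) be the numerators of the convergents of √2. For all integers k ≥ 1 and n ≥ 1, the simple continued fraction expansion of √((p_{k+1} n + 1)² + 2 p_k n + 1) is [p_{k+1} n + 1; \overline{2, 2, …, 2 (k twos), 1, p_{k+1} n, 1, 2, 2, …, 2 (k twos), 2(p_{k+1} n + 1)}]; that is, the period of length 2k+4 consists of the quotient 2 repeated k times, then 1, then p_{k+1} n, then 1, then 2 repeated k times, then 2(p_{k+1} n + 1). -/

import Mathlib

/-- Pell companion sequence 0,1,2,5,12,... -/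
def qA : ℕ → ℤ
  | 0 => 0
  | 1 => 1
  | (j+2) => 2 * qA (j+1) + qA j

/-- numerators 1,1,3,7,17,... -/
def pA : ℕ → ℤ
  | 0 => 1
  | 1 => 1
  | (j+2) => 2 * pA (j+1) + pA j

lemma qA_rec (j : ℕ) : qA (j+2) = 2 * qA (j+1) + qA j := rfl
lemma pA_rec (j : ℕ) : pA (j+2) = 2 * pA (j+1) + pA j := rfl

lemma qA_step : ∀ j, 0 ≤ qA j ∧ qA j ≤ qA (j+1) := by
  intro j
  induction j with
  | zero => exact ⟨le_refl _, by norm_num [qA]⟩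
  | succ j ih => exact ⟨le_trans ih.1 ih.2, by rw [qA_rec]; linarith [ih.1, ih.2]⟩

lemma pA_step : ∀ j, 1 ≤ pA j ∧ pA j ≤ pA (j+1) := by
  intro j
  induction j with
  | zero => exact ⟨le_refl _, by norm_num [pA]⟩
  | succ j ih => exact ⟨le_trans ih.1 ih.2, by rw [pA_rec]; linarith [ih.1, ih.2]⟩

lemma qA_nonneg (j : ℕ) : 0 ≤ qA j := (qA_step j).1
lemma qA_mono (j : ℕ) : qA j ≤ qA (j+1) := (qA_step j).2
lemma pA_pos (j : ℕ) : 1 ≤ pA j := (pA_step j).1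
lemma pA_mono (j : ℕ) : pA j ≤ pA (j+1) := (pA_step j).2

lemma pq : ∀ j, pA (j+1) = qA (j+1) + qA j := by
  have H : ∀ j, pA (j+1) = qA (j+1) + qA j ∧ pA (j+2) = qA (j+2) + qA (j+1) := by
    intro j
    induction j with
    | zero => norm_num [pA, qA]
    | succ j ih =>
      refine ⟨ih.2, ?_⟩
      rw [pA_rec, qA_rec, ih.2, ih.1, qA_rec]
      ring
  exact fun j => (H j).1

lemma I1 : ∀ i j : ℕ, pA (j + i + 1) = pA (j+1) * qA (i+1) + pA j * qA i := by
  have H : ∀ i j, pA (j + i + 1) = pA (j+1) * qA (i+1) + pA j * qA i ∧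
      pA (j + i + 2) = pA (j+1) * qA (i+2) + pA j * qA (i+1) := by
    intro i
    induction i with
    | zero =>
      intro j
      constructor
      · norm_num [qA]
      · show pA (j + 2) = pA (j+1) * qA 2 + pA j * qA 1
        norm_num [qA_rec, qA, pA_rec]; ring
    | succ i ih =>
      intro j
      obtain ⟨h1, h2⟩ := ih j
      refine ⟨h2, ?_⟩
      show pA (j + i + 3) = pA (j+1) * qA (i+3) + pA j * qA (i+2)
      have e1 : pA (j + i + 3) = 2 * pA (j + i + 2) + pA (j + i + 1) := pA_rec _
      have e2 : qA (i+3) = 2 * qA (i+2) + qA (i+1) := qA_rec _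
      rw [e1, h1, h2]
      linear_combination (-(pA (j+1))) * e2 - (pA j) * (qA_rec i)
  exact fun i j => (H i j).1

lemma I2 (j i : ℕ) : pA (j+1) * qA i + pA j * qA (i+1) = 2 * pA j * qA i + pA (j+i) := by
  cases i with
  | zero => norm_num [qA]
  | succ i =>
    have h1 := I1 i j
    have e2 : qA (i+2) = 2 * qA (i+1) + qA i := qA_rec _
    show pA (j+1) * qA (i+1) + pA j * qA (i+2) = 2 * pA j * qA (i+1) + pA (j + i + 1)
    rw [e2]
    linear_combination -h1
lemma cfStep (D b c m b' c' : ℤ) (x : ℝ)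
    (hx : x = (Real.sqrt (D : ℝ) + (b : ℝ)) / (c : ℝ))
    (hc : 0 < c) (hc' : 0 < c') (hb'0 : 0 ≤ b')
    (hm : b' = m * c - b) (hrel : c * c' = D - b' ^ 2)
    (hlt : c' < 2*b' + c) :
    ⌊x⌋ = m ∧ Int.fract x ≠ 0 ∧
      (Int.fract x)⁻¹ = (Real.sqrt (D : ℝ) + (b' : ℝ)) / (c' : ℝ) := by
  have hup : D < (b' + c) ^ 2 := by
    have h := mul_pos hc (show (0:ℤ) < 2*b' + c - c' by linarith)
    nlinarith [hrel, h]
  have hb2D : b' ^ 2 < D := by nlinarith [mul_pos hc hc']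
  have hD0 : (0:ℝ) ≤ (D : ℝ) := by
    have : (0:ℤ) ≤ D := by nlinarith [sq_nonneg b']
    exact_mod_cast this
  have hcR : (0:ℝ) < (c:ℝ) := by exact_mod_cast hc
  have hc'R : (0:ℝ) < (c':ℝ) := by exact_mod_cast hc'
  have hb'R : (0:ℝ) ≤ (b':ℝ) := by exact_mod_cast hb'0
  have h1 : (b' : ℝ) < Real.sqrt (D:ℝ) := by
    rw [show (b':ℝ) = Real.sqrt ((b':ℝ)^2) from (Real.sqrt_sq hb'R).symm]
    apply Real.sqrt_lt_sqrt (by positivity)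
    exact_mod_cast hb2D
  have h2 : Real.sqrt (D:ℝ) < (b' : ℝ) + c := by
    rw [show ((b':ℝ) + c) = Real.sqrt (((b':ℝ)+c)^2) from (Real.sqrt_sq (by linarith)).symm]
    apply Real.sqrt_lt_sqrt hD0
    exact_mod_cast hup
  have hmR : (b' : ℝ) = m * c - b := by exact_mod_cast hm
  have hfloor : ⌊x⌋ = m := by
    rw [hx]
    rw [Int.floor_eq_iff]
    constructor
    · rw [le_div_iff₀ hcR]; linarith
    · rw [div_lt_iff₀ hcR]; push_cast; linarith
  have hfr : Int.fract x = (Real.sqrt (D:ℝ) - b') / c := by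
    rw [Int.fract, hfloor, hx]
    field_simp
    linarith
  have hfrpos : 0 < Int.fract x := by
    rw [hfr]; apply div_pos (by linarith) hcR
  refine ⟨hfloor, ne_of_gt hfrpos, ?_⟩
  rw [hfr, inv_div, div_eq_div_iff (ne_of_gt (by linarith : (0:ℝ) < Real.sqrt ((D:ℤ):ℝ) - (b':ℝ))) (ne_of_gt hc'R)]
  have hs : Real.sqrt (D:ℝ) * Real.sqrt (D:ℝ) = (D:ℝ) := Real.mul_self_sqrt hD0
  have hrelR : (c:ℝ) * (c':ℝ) = (D:ℝ) - (b':ℝ)^2 := by exact_mod_cast hrel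
  linear_combination hrelR - hs

lemma midStep (P Q X₁ X₂ X₃ X₄ n b c b' c' : ℤ) (hn : 1 ≤ n) (x : ℝ)
    (hP : P = 2*X₂ + X₁ + X₃)
    (h2 : X₂ * X₄ = X₃ * (P - X₃))
    (h3 : X₂ + X₄ = Q + 2*X₃)
    (h4 : X₄ ≤ P - 2*X₃ + X₂)
    (h5 : 2*X₃ ≤ P) (h6 : 0 ≤ X₂) (h7 : 0 ≤ X₄) (h8 : X₃ ≤ X₂) (h9 : 0 ≤ X₃)
    (hb : b = (P - 2*X₁)*n + 1) (hc : c = 2*X₂*n + 1)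
    (hb' : b' = (P - 2*X₃)*n + 1) (hc' : c' = 2*X₄*n + 1)
    (hx : x = (Real.sqrt (((P*n+1)^2 + 2*Q*n + 1 : ℤ) : ℝ) + (b : ℝ)) / (c : ℝ)) :
    ⌊x⌋ = 2 ∧ Int.fract x ≠ 0 ∧
      (Int.fract x)⁻¹ = (Real.sqrt (((P*n+1)^2 + 2*Q*n + 1 : ℤ) : ℝ) + (b' : ℝ)) / (c' : ℝ) := by
  apply cfStep ((P*n+1)^2 + 2*Q*n + 1) b c 2 b' c' x hx
  · rw [hc]; nlinarith
  · rw [hc']; nlinarith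
  · rw [hb']; nlinarith
  · rw [hb', hb, hc]; linear_combination (2*n) * hP
  · rw [hc, hc', hb']; linear_combination (4*n^2) * h2 + (2*n) * h3
  · rw [hc', hb', hc]
    have := mul_le_mul_of_nonneg_right h4 (show (0:ℤ) ≤ n by linarith)
    linarith
def Bf (k : ℕ) (n : ℤ) (r : ℕ) : ℤ :=
  if r ≤ k then pA (k+1) * n + 1 - 2 * pA (k - r) * qA r * n
  else if r ≤ k + 2 then pA (k+1) * n
  else pA (k+1) * n + 1 - 2 * pA (r - (k+3)) * qA (2*k+3 - r) * n

def Cf (k : ℕ) (n : ℤ) (r : ℕ) : ℤ :=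
  if r ≤ k then 2 * pA (k - r) * qA (r + 1) * n + 1
  else if r = k + 1 then 2
  else if r = k + 2 then 2 * qA (k+1) * n + 1
  else 2 * pA (r - (k+2)) * qA (2*k+3 - r) * n + 1

def Mf (k : ℕ) (n : ℤ) (r : ℕ) : ℤ :=
  if r < k then 2
  else if r = k then 1
  else if r = k + 1 then pA (k+1) * n
  else if r = k + 2 then 1
  else if r = 2*k+3 then 2 * (pA (k+1) * n + 1) else 2

lemma pq2 (j : ℕ) : pA (j+1) + pA (j+2) = 2 * qA (j+2) := by
  rw [pq j, pq (j+1), qA_rec]; ring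
set_option maxHeartbeats 1000000 in
lemma stepAll (k : ℕ) (hk : 1 ≤ k) (n : ℤ) (hn : 1 ≤ n) (r : ℕ) (hr : r < 2*k+4) (x : ℝ)
    (hx : x = (Real.sqrt (((pA (k+1)*n+1)^2 + 2*pA k*n + 1 : ℤ) : ℝ) + ((Bf k n r : ℤ) : ℝ)) / ((Cf k n r : ℤ) : ℝ)) :
    ⌊x⌋ = Mf k n r ∧ Int.fract x ≠ 0 ∧
      (Int.fract x)⁻¹ = (Real.sqrt (((pA (k+1)*n+1)^2 + 2*pA k*n + 1 : ℤ) : ℝ)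
        + ((Bf k n ((r+1) % (2*k+4)) : ℤ) : ℝ)) / ((Cf k n ((r+1) % (2*k+4)) : ℤ) : ℝ) := by
  have hcases : r < k ∨ r = k ∨ r = k+1 ∨ r = k+2 ∨ (k+3 ≤ r ∧ r ≤ 2*k+2) ∨ r = 2*k+3 := by omega
  rcases hcases with hA | hB | hC | hD | hE | hF
  · -- case A : forward chain of 2's
    obtain ⟨v, rfl⟩ : ∃ v, k = v + r + 1 := ⟨k - r - 1, by omega⟩
    have e1 : (r+1) % (2*(v+r+1)+4) = r+1 := Nat.mod_eq_of_lt (by omega)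
    rw [e1]
    have eB : Bf (v+r+1) n r = pA (v+r+2)*n + 1 - 2*pA (v+1)*qA r*n := by
      simp only [Bf, if_pos (show r ≤ v+r+1 by omega)]
      rw [show v+r+1-r = v+1 from by omega]
    have eC : Cf (v+r+1) n r = 2*pA (v+1)*qA (r+1)*n + 1 := by
      simp only [Cf, if_pos (show r ≤ v+r+1 by omega)]
      rw [show v+r+1-r = v+1 from by omega]
    have eB' : Bf (v+r+1) n (r+1) = pA (v+r+2)*n + 1 - 2*pA v*qA (r+1)*n := by
      simp only [Bf, if_pos (show r+1 ≤ v+r+1 by omega)]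
      rw [show v+r+1-(r+1) = v from by omega]
    have eC' : Cf (v+r+1) n (r+1) = 2*pA v*qA (r+2)*n + 1 := by
      simp only [Cf, if_pos (show r+1 ≤ v+r+1 by omega)]
      rw [show v+r+1-(r+1) = v from by omega]
    have eM : Mf (v+r+1) n r = 2 := by
      simp only [Mf, if_pos (show r < v+r+1 by omega)]
    rw [eB, eC] at hx
    rw [eM, eB', eC']
    have i1 : pA (v+r+2) = pA (v+1)*qA (r+2) + pA v*qA (r+1) := I1 (r+1) v
    have i2 : pA (v+1)*qA (r+1) + pA v*qA (r+2) = 2*pA v*qA (r+1) + pA (v+r+1) := by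
      have := I2 v (r+1)
      rw [show v+(r+1) = v+r+1 from by omega] at this
      exact this
    have hpv : (0:ℤ) ≤ pA v := by linarith [pA_pos v]
    have hpv1 : (0:ℤ) ≤ pA (v+1) := by linarith [pA_pos (v+1)]
    refine midStep (pA (v+r+2)) (pA (v+r+1)) (pA (v+1)*qA r) (pA (v+1)*qA (r+1))
      (pA v*qA (r+1)) (pA v*qA (r+2)) n _ _ _ _ hn x
      ?_ ?_ ?_ ?_ ?_ ?_ ?_ ?_ ?_ (by ring) (by ring) (by ring) (by ring) hx
    · linear_combination i1 + pA (v+1) * qA_rec r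
    · linear_combination (-(pA v * qA (r+1))) * i1
    · linarith
    · nlinarith [i1, mul_nonneg (sub_nonneg.2 (pA_mono v)) (add_nonneg (qA_nonneg (r+2)) (qA_nonneg (r+1)))]
    · nlinarith [i1, mul_le_mul (pA_mono v) (qA_mono (r+1)) (qA_nonneg (r+1)) hpv1]
    · exact mul_nonneg hpv1 (qA_nonneg (r+1))
    · exact mul_nonneg hpv (qA_nonneg (r+2))
    · exact mul_le_mul_of_nonneg_right (pA_mono v) (qA_nonneg (r+1))
    · exact mul_nonneg hpv (qA_nonneg (r+1))
  · -- case B : r = k, quotient 1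
    subst hB
    obtain ⟨k', rfl⟩ : ∃ k', r = k' + 1 := ⟨r - 1, by omega⟩
    have e1 : (k'+1+1) % (2*(k'+1)+4) = k'+2 := Nat.mod_eq_of_lt (by omega)
    rw [e1]
    have eB : Bf (k'+1) n (k'+1) = pA (k'+2)*n + 1 - 2*qA (k'+1)*n := by
      simp only [Bf]
      split_ifs <;> try omega
      rw [show k'+1-(k'+1) = 0 from by omega]
      norm_num [pA]
    have eC : Cf (k'+1) n (k'+1) = 2*qA (k'+2)*n + 1 := by
      simp only [Cf]
      split_ifs <;> try omega
      rw [show k'+1-(k'+1) = 0 from by omega]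
      norm_num [pA]
    have eB' : Bf (k'+1) n (k'+2) = pA (k'+2)*n := by
      simp only [Bf]
      split_ifs <;> try omega
      all_goals rfl
    have eC' : Cf (k'+1) n (k'+2) = 2 := by
      simp only [Cf]
      split_ifs <;> try omega
      all_goals rfl
    have eM : Mf (k'+1) n (k'+1) = 1 := by
      simp only [Mf]
      split_ifs <;> try omega
      all_goals rfl
    rw [eB, eC] at hx
    rw [eM, eB', eC']
    have f2 : pA (k'+2) = qA (k'+2) + qA (k'+1) := pq (k'+1)
    have g2 : pA (k'+1) + pA (k'+2) = 2 * qA (k'+2) := pq2 k'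
    have hP1 : (1:ℤ) ≤ pA (k'+2) := pA_pos _
    have hQ1 : (1:ℤ) ≤ pA (k'+1) := pA_pos _
    refine cfStep _ _ _ 1 _ _ x hx ?_ ?_ ?_ ?_ ?_ ?_
    · nlinarith [qA_nonneg (k'+2)]
    · norm_num
    · nlinarith
    · linear_combination (2*n) * f2
    · linear_combination (-2*n) * g2
    · nlinarith
  · -- case C : r = k+1, the big middle quotient
    subst hC
    obtain ⟨k', rfl⟩ : ∃ k', k = k' + 1 := ⟨k - 1, by omega⟩
    have e1 : (k'+1+1+1) % (2*(k'+1)+4) = k'+3 := Nat.mod_eq_of_lt (by omega)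
    rw [e1]
    have eB : Bf (k'+1) n (k'+1+1) = pA (k'+2)*n := by
      simp only [Bf]
      split_ifs <;> try omega
      all_goals rfl
    have eC : Cf (k'+1) n (k'+1+1) = 2 := by
      simp only [Cf]
      split_ifs <;> try omega
      all_goals rfl
    have eB' : Bf (k'+1) n (k'+3) = pA (k'+2)*n := by
      simp only [Bf]
      split_ifs <;> try omega
      all_goals rfl
    have eC' : Cf (k'+1) n (k'+3) = 2*qA (k'+2)*n + 1 := by
      simp only [Cf]
      split_ifs <;> try omega
      all_goals rfl
    have eM : Mf (k'+1) n (k'+1+1) = pA (k'+2)*n := by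
      simp only [Mf]
      split_ifs <;> try omega
      all_goals rfl
    rw [eB, eC] at hx
    rw [eM, eB', eC']
    have g2 : pA (k'+1) + pA (k'+2) = 2 * qA (k'+2) := pq2 k'
    have hP1 : (1:ℤ) ≤ pA (k'+2) := pA_pos _
    have hQ1 : (1:ℤ) ≤ pA (k'+1) := pA_pos _
    have hPQ : pA (k'+1) ≤ pA (k'+2) := pA_mono _
    refine cfStep _ _ _ (pA (k'+2)*n) _ _ x hx ?_ ?_ ?_ ?_ ?_ ?_
    · norm_num
    · nlinarith [qA_nonneg (k'+2)]
    · nlinarith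
    · ring
    · linear_combination (-2*n) * g2
    · nlinarith
  · -- case D : r = k+2, quotient 1 going back
    subst hD
    obtain ⟨k', rfl⟩ : ∃ k', k = k' + 1 := ⟨k - 1, by omega⟩
    have e1 : (k'+1+2+1) % (2*(k'+1)+4) = k'+4 := Nat.mod_eq_of_lt (by omega)
    rw [e1]
    have eB : Bf (k'+1) n (k'+1+2) = pA (k'+2)*n := by
      simp only [Bf]
      split_ifs <;> try omega
      all_goals rfl
    have eC : Cf (k'+1) n (k'+1+2) = 2*qA (k'+2)*n + 1 := by
      simp only [Cf]
      split_ifs <;> try omega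
      all_goals rfl
    have eB' : Bf (k'+1) n (k'+4) = pA (k'+2)*n + 1 - 2*qA (k'+1)*n := by
      simp only [Bf]
      split_ifs <;> try omega
      rw [show k'+4-(k'+1+3) = 0 from by omega, show 2*(k'+1)+3-(k'+4) = k'+1 from by omega]
      norm_num [pA]
    have eC' : Cf (k'+1) n (k'+4) = 2*qA (k'+1)*n + 1 := by
      simp only [Cf]
      split_ifs <;> try omega
      rw [show k'+4-(k'+1+2) = 1 from by omega, show 2*(k'+1)+3-(k'+4) = k'+1 from by omega]
      norm_num [pA]
    have eM : Mf (k'+1) n (k'+1+2) = 1 := by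
      simp only [Mf]
      split_ifs <;> try omega
      all_goals rfl
    rw [eB, eC] at hx
    rw [eM, eB', eC']
    have f1 : pA (k'+2) = qA (k'+2) + qA (k'+1) := pq (k'+1)
    have f2 : pA (k'+1) = qA (k'+1) + qA k' := pq k'
    have f3 : qA (k'+2) = 2*qA (k'+1) + qA k' := qA_rec k'
    have hq1 : (0:ℤ) ≤ qA (k'+1) := qA_nonneg _
    have hq0 : (0:ℤ) ≤ qA k' := qA_nonneg _
    refine cfStep _ _ _ 1 _ _ x hx ?_ ?_ ?_ ?_ ?_ ?_
    · nlinarith [qA_nonneg (k'+2)]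
    · nlinarith
    · nlinarith
    · linear_combination (2*n) * f1
    · linear_combination (-4*qA (k'+1)*n^2) * f1 + (2*n) * f3 - (2*n) * f2
    · nlinarith
  · -- case E : mirrored chain of 2's
    obtain ⟨hE1, hE2⟩ := hE
    obtain ⟨w, rfl⟩ : ∃ w, r = k+3+w := ⟨r - (k+3), by omega⟩
    obtain ⟨i, rfl⟩ : ∃ i, k = w + i + 1 := ⟨k - w - 1, by omega⟩
    have e1 : (w+i+1+3+w+1) % (2*(w+i+1)+4) = w+i+1+3+w+1 := Nat.mod_eq_of_lt (by omega)
    rw [e1]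
    have eB : Bf (w+i+1) n (w+i+1+3+w) = pA (w+i+2)*n + 1 - 2*pA w*qA (i+1)*n := by
      simp only [Bf]
      split_ifs <;> try omega
      rw [show w+i+1+3+w-(w+i+1+3) = w from by omega,
        show 2*(w+i+1)+3-(w+i+1+3+w) = i+1 from by omega]
    have eC : Cf (w+i+1) n (w+i+1+3+w) = 2*pA (w+1)*qA (i+1)*n + 1 := by
      simp only [Cf]
      split_ifs <;> try omega
      rw [show w+i+1+3+w-(w+i+1+2) = w+1 from by omega,
        show 2*(w+i+1)+3-(w+i+1+3+w) = i+1 from by omega]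
    have eB' : Bf (w+i+1) n (w+i+1+3+w+1) = pA (w+i+2)*n + 1 - 2*pA (w+1)*qA i*n := by
      simp only [Bf]
      split_ifs <;> try omega
      rw [show w+i+1+3+w+1-(w+i+1+3) = w+1 from by omega,
        show 2*(w+i+1)+3-(w+i+1+3+w+1) = i from by omega]
    have eC' : Cf (w+i+1) n (w+i+1+3+w+1) = 2*pA (w+2)*qA i*n + 1 := by
      simp only [Cf]
      split_ifs <;> try omega
      rw [show w+i+1+3+w+1-(w+i+1+2) = w+2 from by omega,
        show 2*(w+i+1)+3-(w+i+1+3+w+1) = i from by omega]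
    have eM : Mf (w+i+1) n (w+i+1+3+w) = 2 := by
      simp only [Mf]
      split_ifs <;> try omega
      all_goals rfl
    rw [eB, eC] at hx
    rw [eM, eB', eC']
    have i1 : pA (w+i+2) = pA (w+2)*qA (i+1) + pA (w+1)*qA i := by
      have h := I1 i (w+1)
      rw [show w+1+i+1 = w+i+2 from by omega, show w+1+1 = w+2 from rfl] at h
      exact h
    have i2 : pA (w+2)*qA i + pA (w+1)*qA (i+1) = 2*pA (w+1)*qA i + pA (w+i+1) := by
      have h := I2 (w+1) i
      rw [show w+1+i = w+i+1 from by omega, show w+1+1 = w+2 from rfl] at h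
      exact h
    have hpw1 : (0:ℤ) ≤ pA (w+1) := by linarith [pA_pos (w+1)]
    have hpw2 : (0:ℤ) ≤ pA (w+2) := by linarith [pA_pos (w+2)]
    refine midStep (pA (w+i+2)) (pA (w+i+1)) (pA w*qA (i+1)) (pA (w+1)*qA (i+1))
      (pA (w+1)*qA i) (pA (w+2)*qA i) n _ _ _ _ hn x
      ?_ ?_ ?_ ?_ ?_ ?_ ?_ ?_ ?_ (by ring) (by ring) (by ring) (by ring) hx
    · linear_combination i1 + qA (i+1) * pA_rec w
    · linear_combination (-(pA (w+1) * qA i)) * i1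
    · linarith
    · nlinarith [i1, mul_nonneg (add_nonneg hpw2 hpw1) (sub_nonneg.2 (qA_mono i))]
    · nlinarith [i1, mul_le_mul (pA_mono (w+1)) (qA_mono i) (qA_nonneg i) hpw2]
    · exact mul_nonneg hpw1 (qA_nonneg (i+1))
    · exact mul_nonneg hpw2 (qA_nonneg i)
    · exact mul_le_mul_of_nonneg_left (qA_mono i) hpw1
    · exact mul_nonneg hpw1 (qA_nonneg i)
  · -- case F : r = 2k+3, quotient 2a, wrap around
    subst hF
    have e1 : (2*k+3+1) % (2*k+4) = 0 := by
      rw [show 2*k+3+1 = 2*k+4 from rfl]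
      exact Nat.mod_self _
    rw [e1]
    have eB : Bf k n (2*k+3) = pA (k+1)*n + 1 := by
      simp only [Bf]
      split_ifs <;> try omega
      rw [show 2*k+3-(k+3) = k from by omega, show 2*k+3-(2*k+3) = 0 from by omega]
      norm_num [qA]
    have eC : Cf k n (2*k+3) = 1 := by
      simp only [Cf]
      split_ifs <;> try omega
      rw [show 2*k+3-(2*k+3) = 0 from by omega]
      norm_num [qA]
    have eB' : Bf k n 0 = pA (k+1)*n + 1 := by
      simp only [Bf]
      split_ifs <;> try omega
      norm_num [qA]
    have eC' : Cf k n 0 = 2*pA k*n + 1 := by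
      simp only [Cf]
      split_ifs <;> try omega
      rw [show k-0 = k from by omega]
      norm_num [qA]
    have eM : Mf k n (2*k+3) = 2*(pA (k+1)*n + 1) := by
      simp only [Mf]
      split_ifs <;> try omega
      all_goals rfl
    rw [eB, eC] at hx
    rw [eM, eB', eC']
    have hP1 : (1:ℤ) ≤ pA (k+1) := pA_pos _
    have hQ1 : (1:ℤ) ≤ pA k := pA_pos _
    have hPQ : pA k ≤ pA (k+1) := pA_mono _
    refine cfStep _ _ _ (2*(pA (k+1)*n + 1)) _ _ x hx ?_ ?_ ?_ ?_ ?_ ?_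
    · norm_num
    · nlinarith
    · nlinarith
    · ring
    · ring
    · nlinarith

lemma MLIST (k : ℕ) (hk : 1 ≤ k) (n : ℤ) (r : ℕ) (hr : r < 2*k+4) :
    (List.replicate k (2:ℤ) ++ [1, pA (k+1) * n, 1]
      ++ List.replicate k (2:ℤ) ++ [2 * (pA (k+1) * n + 1)]).getD r 0 = Mf k n r := by
  have hcases : r < k ∨ r = k ∨ r = k+1 ∨ r = k+2 ∨ (k+3 ≤ r ∧ r ≤ 2*k+2) ∨ r = 2*k+3 := by omega
  have L0 : (List.replicate k (2:ℤ)).length = k := List.length_replicate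
  have L1 : (List.replicate k (2:ℤ) ++ [1, pA (k+1)*n, 1]).length = k+3 := by
    simp
  have L2 : ((List.replicate k (2:ℤ) ++ [1, pA (k+1)*n, 1]) ++ List.replicate k (2:ℤ)).length
      = 2*k+3 := by
    simp; omega
  rcases hcases with h | h | h | h | ⟨h1, h2⟩ | h
  · rw [List.getD_append _ _ _ _ (by omega), List.getD_append _ _ _ _ (by omega),
      List.getD_append _ _ _ _ (by omega)]
    rw [List.getD_eq_getElem _ _ (by simpa [L0] using h), List.getElem_replicate]
    simp only [Mf, if_pos h]
  · rw [List.getD_append _ _ _ _ (by omega), List.getD_append _ _ _ _ (by omega),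
      List.getD_append_right _ _ _ _ (by omega), L0, h, Nat.sub_self]
    simp only [List.getD_cons_zero]
    simp only [Mf]
    split_ifs <;> try omega
    all_goals rfl
  · rw [List.getD_append _ _ _ _ (by omega), List.getD_append _ _ _ _ (by omega),
      List.getD_append_right _ _ _ _ (by omega), L0, h, show k+1-k = 1 from by omega]
    simp only [List.getD_cons_succ, List.getD_cons_zero]
    simp only [Mf]
    split_ifs <;> try omega
    all_goals rfl
  · rw [List.getD_append _ _ _ _ (by omega), List.getD_append _ _ _ _ (by omega),
      List.getD_append_right _ _ _ _ (by omega), L0, h, show k+2-k = 2 from by omega]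
    simp only [List.getD_cons_succ, List.getD_cons_zero]
    simp only [Mf]
    split_ifs <;> try omega
    all_goals rfl
  · rw [List.getD_append _ _ _ _ (by omega), List.getD_append_right _ _ _ _ (by omega), L1]
    rw [List.getD_eq_getElem _ _ (by simp [L0]; omega), List.getElem_replicate]
    simp only [Mf]
    split_ifs <;> try omega
    all_goals rfl
  · rw [List.getD_append_right _ _ _ _ (by omega), L2, h, Nat.sub_self]
    simp only [List.getD_cons_zero]
    simp only [Mf]
    split_ifs <;> try omega
    all_goals rfl

set_option maxHeartbeats 1000000 in
theorem cf_repeated_twos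
    (p : ℕ → ℤ)
    (hp0 : p 0 = 1) (hp1 : p 1 = 1)
    (hp : ∀ j : ℕ, 1 ≤ j → p (j + 1) = 2 * p j + p (j - 1))
    (k : ℕ) (hk : 1 ≤ k) (n : ℤ) (hn : 1 ≤ n) :
    ⌊Real.sqrt (((p (k + 1) * n + 1) ^ 2 + 2 * p k * n + 1 : ℤ) : ℝ)⌋ = p (k + 1) * n + 1 ∧
    ∀ i : ℕ,
      (GenContFract.of
          (Real.sqrt (((p (k + 1) * n + 1) ^ 2 + 2 * p k * n + 1 : ℤ) : ℝ))).partDens.get? i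
        = some (((List.replicate k (2 : ℤ) ++ [1, p (k + 1) * n, 1]
            ++ List.replicate k (2 : ℤ) ++ [2 * (p (k + 1) * n + 1)]).getD
              (i % (2 * k + 4)) 0 : ℝ)) := by
  have hpp : ∀ j, p j = pA j ∧ p (j+1) = pA (j+1) := by
    intro j
    induction j with
    | zero => exact ⟨hp0, hp1⟩
    | succ j ih =>
      refine ⟨ih.2, ?_⟩
      have h := hp (j+1) (by omega)
      simp only [Nat.add_sub_cancel] at h
      rw [h, ih.1, ih.2, pA_rec]
  have hpj : ∀ j, p j = pA j := fun j => (hpp j).1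
  simp only [hpj]
  set x0 : ℝ := Real.sqrt (((pA (k+1) * n + 1) ^ 2 + 2 * pA k * n + 1 : ℤ) : ℝ) with hx0
  set X : ℕ → ℝ := fun t => Nat.rec x0 (fun _ y => (Int.fract y)⁻¹) t with hX
  have eB0 : Bf k n 0 = pA (k+1)*n + 1 := by
    simp only [Bf]
    split_ifs <;> try omega
    norm_num [qA]
  have eC0 : Cf k n 0 = 2*pA k*n + 1 := by
    simp only [Cf]
    split_ifs <;> try omega
    rw [show k-0 = k from by omega]
    norm_num [qA]
  have init : ⌊x0⌋ = pA (k+1)*n + 1 ∧ Int.fract x0 ≠ 0 ∧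
      (Int.fract x0)⁻¹ = (Real.sqrt (((pA (k+1) * n + 1) ^ 2 + 2 * pA k * n + 1 : ℤ) : ℝ)
        + ((pA (k+1)*n + 1 : ℤ) : ℝ)) / ((2*pA k*n + 1 : ℤ) : ℝ) := by
    refine cfStep _ 0 1 (pA (k+1)*n + 1) _ _ x0 ?_ ?_ ?_ ?_ ?_ ?_ ?_
    · rw [hx0]; push_cast; ring
    · norm_num
    · nlinarith [pA_pos k]
    · nlinarith [pA_pos (k+1)]
    · ring
    · ring
    · nlinarith [pA_mono k, pA_pos k, pA_pos (k+1)]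
  have KEY : ∀ t, X (t+1) = (Real.sqrt (((pA (k+1) * n + 1) ^ 2 + 2 * pA k * n + 1 : ℤ) : ℝ)
      + ((Bf k n (t % (2*k+4)) : ℤ) : ℝ)) / ((Cf k n (t % (2*k+4)) : ℤ) : ℝ) := by
    intro t
    induction t with
    | zero =>
      show (Int.fract x0)⁻¹ = _
      rw [Nat.zero_mod, eB0, eC0]
      exact init.2.2
    | succ t ih =>
      have hmod : t % (2*k+4) < 2*k+4 := Nat.mod_lt _ (by omega)
      have step := stepAll k hk n hn (t % (2*k+4)) hmod (X (t+1)) ih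
      have e2 : X (t+2) = (Int.fract (X (t+1)))⁻¹ := rfl
      have e : (t % (2*k+4) + 1) % (2*k+4) = (t+1) % (2*k+4) := by
        conv_rhs => rw [Nat.add_mod, Nat.mod_eq_of_lt (show 1 < 2*k+4 by omega)]
      rw [e2, step.2.2, e]
  have QUOTS : ∀ i, ⌊X (i+1)⌋ = Mf k n (i % (2*k+4)) ∧ Int.fract (X (i+1)) ≠ 0 := by
    intro i
    have hmod : i % (2*k+4) < 2*k+4 := Nat.mod_lt _ (by omega)
    have step := stepAll k hk n hn (i % (2*k+4)) hmod (X (i+1)) (KEY i)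
    exact ⟨step.1, step.2.1⟩
  have FR : ∀ i, Int.fract (X i) ≠ 0 := by
    intro i
    cases i with
    | zero => exact init.2.1
    | succ i => exact (QUOTS i).2
  have CONN : ∀ i t, (GenContFract.of (X t)).s.get? i
      = (GenContFract.of (X (t+i))).s.get? 0 := by
    intro i
    induction i with
    | zero => intro t; rfl
    | succ i ih =>
      intro t
      rw [GenContFract.of_s_succ]
      have e : (GenContFract.of ((Int.fract (X t))⁻¹)).s.get? i
          = (GenContFract.of (X (t+1))).s.get? i := rfl
      rw [e, ih (t+1), show t+1+i = t+(i+1) from by omega]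
  constructor
  · exact init.1
  · intro i
    have hmod : i % (2*k+4) < 2*k+4 := Nat.mod_lt _ (by omega)
    have h1 : (GenContFract.of x0).partDens.get? i
        = ((GenContFract.of x0).s.get? i).map GenContFract.Pair.b :=
      Stream'.Seq.map_get? _ _ i
    have h2 : (GenContFract.of x0).s.get? i = (GenContFract.of (X i)).s.get? 0 := by
      have := CONN i 0
      rwa [show (0:ℕ)+i = i from by omega] at this
    have h3 : (GenContFract.of (X i)).s.get? 0
        = some ⟨1, (⌊(Int.fract (X i))⁻¹⌋ : ℝ)⟩ := GenContFract.of_s_head (FR i)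
    have h4 : (⌊(Int.fract (X i))⁻¹⌋ : ℤ) = Mf k n (i % (2*k+4)) := (QUOTS i).1
    rw [h1, h2, h3]
    simp only [Option.map_some]
    rw [MLIST k hk n (i % (2*k+4)) hmod]
    rw [h4]
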